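/- For a Frobenius Hopf algebroid H (the horizontal Hopf algebroid of a distributive double algebra), the full subcategory of finitely generated projective right H-modules is closed under the monoidal product of M_H; in particular H ⊗_R H is finitely generated projective as a right H-module, via the right H-module isomorphism Γ_RB : H ⊗_R H → A ⊗_B H, a ⊗ a' ↦ a_(1) ⊗_B a_(2) ∘ a', where A_B is finitely generated projective. -/

import Mathlib

open scoped TensorProduct
open Finset Function

noncomputable section

/-- A (Frobenius, distributive) double algebra with antipode, over a commutative
ring `k`: one `k`-module `A` with a vertical multiplication `vmul` (`∘`, unit `e`)
and a horizontal multiplication `hmul` (`⋆`, unit `i`), the four Frobenius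
dual-basis systems for the base maps `φ_B, φ_T, φ_L, φ_R`, the four
distributivity laws, and an antipode `S`. -/
structure DDA (k A : Type) [CommRing k] [AddCommGroup A] [Module k A] : Type where
  vmul : A →ₗ[k] A →ₗ[k] A
  hmul : A →ₗ[k] A →ₗ[k] A
  e : A
  i : A
  vassoc : ∀ a b c, vmul (vmul a b) c = vmul a (vmul b c)
  e_vmul : ∀ a, vmul e a = a
  vmul_e : ∀ a, vmul a e = a
  hassoc : ∀ a b c, hmul (hmul a b) c = hmul a (hmul b c)
  i_hmul : ∀ a, hmul i a = a
  hmul_i : ∀ a, hmul a i = a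
  nB : ℕ
  uB : Fin nB → A
  vB : Fin nB → A
  nT : ℕ
  uT : Fin nT → A
  vT : Fin nT → A
  nL : ℕ
  xL : Fin nL → A
  yL : Fin nL → A
  nR : ℕ
  xR : Fin nR → A
  yR : Fin nR → A
  frobB1 : ∀ a, ∑ j, hmul (vmul (hmul a (uB j)) i) (vB j) = a
  frobB2 : ∀ a, ∑ j, hmul (hmul a (uB j)) (vmul (vB j) i) = a
  frobT1 : ∀ a, ∑ j, hmul (vmul i (hmul a (uT j))) (vT j) = a
  frobT2 : ∀ a, ∑ j, hmul (hmul a (uT j)) (vmul i (vT j)) = a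
  frobL1 : ∀ a, ∑ j, vmul (hmul (vmul a (xL j)) e) (yL j) = a
  frobL2 : ∀ a, ∑ j, vmul (vmul a (xL j)) (hmul (yL j) e) = a
  frobR1 : ∀ a, ∑ j, vmul (hmul e (vmul a (xR j))) (yR j) = a
  frobR2 : ∀ a, ∑ j, vmul (vmul a (xR j)) (hmul e (yR j)) = a
  distB : ∀ a a' a'', vmul a (hmul a' a'') = ∑ j, hmul (vmul (hmul a (uB j)) a') (vmul (vB j) a'')
  distL : ∀ a a' a'', hmul a (vmul a' a'') = ∑ j, vmul (hmul (vmul a (xL j)) a') (hmul (yL j) a'')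
  distT : ∀ a a' a'', vmul (hmul a' a'') a = ∑ j, hmul (vmul a' (hmul a (uT j))) (vmul a'' (vT j))
  distR : ∀ a a' a'', hmul (vmul a' a'') a = ∑ j, vmul (hmul a' (vmul a (xR j))) (hmul a'' (yR j))
  S : A ≃ₗ[k] A
  S_vmul : ∀ a b, S (vmul a b) = vmul (S b) (S a)
  S_hmul : ∀ a b, S (hmul a b) = hmul (S b) (S a)

namespace DDA

variable {k A : Type} [CommRing k] [AddCommGroup A] [Module k A] (D : DDA k A)

/-- `φ_B(a) = a ∘ i`. -/
def phiB (a : A) : A := D.vmul a D.i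
/-- `φ_T(a) = i ∘ a`. -/
def phiT (a : A) : A := D.vmul D.i a
/-- `φ_L(a) = a ⋆ e`. -/
def phiL (a : A) : A := D.hmul a D.e
/-- `φ_R(a) = e ⋆ a`. -/
def phiR (a : A) : A := D.hmul D.e a

def Bset : Set A := Set.range D.phiB
def Tset : Set A := Set.range D.phiT
def Lset : Set A := Set.range D.phiL
def Rset : Set A := Set.range D.phiR

end DDA

set_option maxHeartbeats 1000000

/-- A right module over the horizontal algebra `H = ⟨A,⋆,i⟩` of a double
algebra. -/
structure RightHMod (k A : Type) [CommRing k] [AddCommGroup A] [Module k A]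
    (D : DDA k A) where
  X : Type
  [instAdd : AddCommGroup X]
  [instMod : Module k X]
  act : X →ₗ[k] A →ₗ[k] X
  act_act : ∀ x a b, act (act x a) b = act x (D.hmul a b)
  act_i : ∀ x, act x D.i = x

attribute [instance] RightHMod.instAdd RightHMod.instMod

namespace RightHMod

variable {k A : Type} [CommRing k] [AddCommGroup A] [Module k A] {D : DDA k A}

/-- A right `H`-module is finitely generated projective iff it is a direct
summand of a finite direct sum of copies of the regular module `H`. -/
def Fgp (Y : RightHMod k A D) : Prop :=
  ∃ (n : ℕ) (u : Y.X →ₗ[k] (Fin n → A)) (p : (Fin n → A) →ₗ[k] Y.X),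
    (∀ x h j, u (Y.act x h) j = D.hmul (u x j) h) ∧
    (∀ v h, p (fun j => D.hmul (v j) h) = Y.act (p v) h) ∧
    ∀ x, p (u x) = x

/-- Relators for the monoidal product `X ⊗_R Y` of two right `H`-modules
(`x · r ⊗ y = x ⊗ r · y`, with `x · r = x ◁ φ_T(r)`, `r · y = y ◁ φ_B(r)`,
`r = φ_R(c)`). -/
def relXY (Y Y' : RightHMod k A D) : Submodule k (Y.X ⊗[k] Y'.X) :=
  Submodule.span k
    { z | ∃ x y c, z = Y.act x (D.phiT (D.phiR c)) ⊗ₜ[k] y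
        - x ⊗ₜ[k] Y'.act y (D.phiB (D.phiR c)) }

def TensorR (Y Y' : RightHMod k A D) := (Y.X ⊗[k] Y'.X) ⧸ relXY Y Y'

instance (Y Y' : RightHMod k A D) : AddCommGroup (TensorR Y Y') :=
  inferInstanceAs (AddCommGroup ((Y.X ⊗[k] Y'.X) ⧸ relXY Y Y'))
instance (Y Y' : RightHMod k A D) : Module k (TensorR Y Y') :=
  inferInstanceAs (Module k ((Y.X ⊗[k] Y'.X) ⧸ relXY Y Y'))

def mkXY (Y Y' : RightHMod k A D) : (Y.X ⊗[k] Y'.X) →ₗ[k] TensorR Y Y' :=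
  (relXY Y Y').mkQ

/-- The diagonal right `H`-action on `X ⊗_R Y`
(`(x ⊗ y) ◁ h = (x ◁ h^[1]) ⊗ (y ◁ h^[2])` with `Δ_R h = Σ (h ∘ x^j) ⊗ y^j`). -/
def IsDiagAct (Y Y' : RightHMod k A D)
    (act2 : TensorR Y Y' →ₗ[k] A →ₗ[k] TensorR Y Y') : Prop :=
  ∀ x y h, act2 (mkXY Y Y' (x ⊗ₜ[k] y)) h
    = ∑ j, mkXY Y Y' (Y.act x (D.vmul h (D.xR j)) ⊗ₜ[k] Y'.act y (D.yR j))

/-- Finitely generated projectivity of a tensor square relative to a given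
diagonal action. -/
def FgpOn (Y Y' : RightHMod k A D) (act2 : TensorR Y Y' →ₗ[k] A →ₗ[k] TensorR Y Y') :
    Prop :=
  ∃ (n : ℕ) (u : TensorR Y Y' →ₗ[k] (Fin n → A))
    (p : (Fin n → A) →ₗ[k] TensorR Y Y'),
    (∀ z h j, u (act2 z h) j = D.hmul (u z j) h) ∧
    (∀ v h, p (fun j => D.hmul (v j) h) = act2 (p v) h) ∧
    ∀ z, p (u z) = z

end RightHMod

section Stmt18

variable {k A : Type} [CommRing k] [AddCommGroup A] [Module k A] (D : DDA k A)

/-- The regular right `H`-module. -/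
def regH : RightHMod k A D where
  X := A
  act := D.hmul
  act_act := D.hassoc
  act_i := D.hmul_i

/-- Relators for `A ⊗_B H` (`a · b ⊗ h = a ⊗ b ⋆ h`, `b ∈ B`). -/
def relAB : Submodule k (A ⊗[k] A) :=
  Submodule.span k
    { z | ∃ a h c, z = D.hmul a (D.phiB c) ⊗ₜ[k] h - a ⊗ₜ[k] D.hmul (D.phiB c) h }

def AtB := (A ⊗[k] A) ⧸ relAB D

instance : AddCommGroup (AtB D) := inferInstanceAs (AddCommGroup ((A ⊗[k] A) ⧸ relAB D))
instance : Module k (AtB D) := inferInstanceAs (Module k ((A ⊗[k] A) ⧸ relAB D))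

def mkAB : (A ⊗[k] A) →ₗ[k] AtB D := (relAB D).mkQ

-- ======================= auxiliary lemmas =======================

section AuxAlg

variable {k A : Type} [CommRing k] [AddCommGroup A] [Module k A] (D : DDA k A)

lemma dda_hmul_sum {n : ℕ} (a : A) (f : Fin n → A) :
    D.hmul a (∑ j, f j) = ∑ j, D.hmul a (f j) := map_sum _ f _

lemma dda_sum_hmul {n : ℕ} (f : Fin n → A) (b : A) :
    D.hmul (∑ j, f j) b = ∑ j, D.hmul (f j) b := by
  rw [map_sum, LinearMap.sum_apply]

lemma dda_vmul_sum {n : ℕ} (a : A) (f : Fin n → A) :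
    D.vmul a (∑ j, f j) = ∑ j, D.vmul a (f j) := map_sum _ f _

lemma dda_sum_vmul {n : ℕ} (f : Fin n → A) (b : A) :
    D.vmul (∑ j, f j) b = ∑ j, D.vmul (f j) b := by
  rw [map_sum, LinearMap.sum_apply]

/-- `ExpB`: `a ∘ h = ∑ φB(a⋆u_j) ⋆ (v_j ∘ h)`. -/
lemma dda_expB (a h₀ : A) :
    D.vmul a h₀ = ∑ j, D.hmul (D.vmul (D.hmul a (D.uB j)) D.i) (D.vmul (D.vB j) h₀) := by
  have h := D.distB a D.i h₀
  rwa [D.i_hmul] at h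

/-- `★`: `φB(y⋆z) = ∑ (y∘uT_m) ⋆ (z∘vT_m)`. -/
lemma dda_starB (y z : A) :
    D.vmul (D.hmul y z) D.i = ∑ m, D.hmul (D.vmul y (D.uT m)) (D.vmul z (D.vT m)) := by
  have h := D.distT D.i y z
  simp only [D.i_hmul] at h
  exact h

/-- `G1`: `∑ u_j ⋆ (v_j ∘ z) = φT(φR z)`. -/
lemma dda_g1 (z : A) :
    ∑ j, D.hmul (D.uB j) (D.vmul (D.vB j) z) = D.vmul D.i (D.hmul D.e z) := by
  have h := D.distB D.i D.e z
  simp only [D.i_hmul, D.vmul_e] at h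
  exact h.symm

/-- `U7`: `a = ∑ φT(φR(uT_m)) ⋆ (a ∘ vT_m)`. -/
lemma dda_u7 (a : A) :
    ∑ m, D.hmul (D.vmul D.i (D.hmul D.e (D.uT m))) (D.vmul a (D.vT m)) = a := by
  have h := D.distT D.e D.i a
  simp only [D.i_hmul, D.vmul_e] at h
  exact h.symm

/-- `DualB`: `a = ∑ u_j ⋆ φB(v_j ⋆ a)`. -/
lemma dda_dualB (a : A) :
    ∑ j, D.hmul (D.uB j) (D.vmul (D.hmul (D.vB j) a) D.i) = a := by
  calc ∑ j, D.hmul (D.uB j) (D.vmul (D.hmul (D.vB j) a) D.i)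
      = ∑ j, ∑ m, D.hmul (D.hmul (D.uB j) (D.vmul (D.vB j) (D.uT m))) (D.vmul a (D.vT m)) := by
        simp only [dda_starB, dda_hmul_sum, D.hassoc]
    _ = ∑ m, ∑ j, D.hmul (D.hmul (D.uB j) (D.vmul (D.vB j) (D.uT m))) (D.vmul a (D.vT m)) :=
        Finset.sum_comm
    _ = ∑ m, D.hmul (D.vmul D.i (D.hmul D.e (D.uT m))) (D.vmul a (D.vT m)) := by
        simp only [← dda_sum_hmul, dda_g1]
    _ = a := dda_u7 D a

/-- `★RL`: `φR(y∘z) = ∑ (xL_l ⋆ y) ∘ (yL_l ⋆ z)`. -/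
lemma dda_starRL (y z : A) :
    D.hmul D.e (D.vmul y z) = ∑ l, D.vmul (D.hmul (D.xL l) y) (D.hmul (D.yL l) z) := by
  have h := D.distL D.e y z
  simp only [D.e_vmul] at h
  exact h

/-- `★LR`: `φL(y∘z) = ∑ (y ⋆ xR_m) ∘ (z ⋆ yR_m)`. -/
lemma dda_starLR (y z : A) :
    D.hmul (D.vmul y z) D.e = ∑ m, D.vmul (D.hmul y (D.xR m)) (D.hmul z (D.yR m)) := by
  have h := D.distR D.e y z
  simp only [D.e_vmul] at h
  exact h

/-- `G2R`: `∑ xR_m ∘ (z ⋆ yR_m) = φL(φT z)`. -/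
lemma dda_g2R (z : A) :
    ∑ m, D.vmul (D.xR m) (D.hmul z (D.yR m)) = D.hmul (D.vmul D.i z) D.e := by
  have h := dda_starLR D D.i z
  simp only [D.i_hmul] at h
  exact h.symm

/-- `ExpL`: `a ⋆ h = ∑ φL(a∘xL_l) ∘ (yL_l ⋆ h)`. -/
lemma dda_expL (a h₀ : A) :
    D.hmul a h₀ = ∑ l, D.vmul (D.hmul (D.vmul a (D.xL l)) D.e) (D.hmul (D.yL l) h₀) := by
  have h := D.distL a D.e h₀
  rwa [D.e_vmul] at h

/-- `U7TR`: `a = ∑ φL(φT(xL_l)) ∘ (yL_l ⋆ a)`. -/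
lemma dda_u7TR (a : A) :
    ∑ l, D.vmul (D.hmul (D.vmul D.i (D.xL l)) D.e) (D.hmul (D.yL l) a) = a := by
  have h := dda_expL D D.i a
  rw [D.i_hmul] at h
  exact h.symm

/-- `DualR`: `a = ∑ xR_m ∘ φR(yR_m ∘ a)`. -/
lemma dda_dualR (a : A) :
    ∑ m, D.vmul (D.xR m) (D.hmul D.e (D.vmul (D.yR m) a)) = a := by
  calc ∑ m, D.vmul (D.xR m) (D.hmul D.e (D.vmul (D.yR m) a))
      = ∑ m, ∑ l, D.vmul (D.vmul (D.xR m) (D.hmul (D.xL l) (D.yR m))) (D.hmul (D.yL l) a) := by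
        simp only [dda_starRL, dda_vmul_sum, D.vassoc]
    _ = ∑ l, ∑ m, D.vmul (D.vmul (D.xR m) (D.hmul (D.xL l) (D.yR m))) (D.hmul (D.yL l) a) :=
        Finset.sum_comm
    _ = ∑ l, D.vmul (D.hmul (D.vmul D.i (D.xL l)) D.e) (D.hmul (D.yL l) a) := by
        simp only [← dda_sum_vmul, dda_g2R]
    _ = a := dda_u7TR D a

/-- `ρ`: `X ∘ φR(d) = ∑ (X ⋆ u_j) ⋆ (v_j ∘ d)`. -/
lemma dda_rho (X d : A) :
    D.vmul X (D.hmul D.e d) = ∑ j, D.hmul (D.hmul X (D.uB j)) (D.vmul (D.vB j) d) := by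
  have h := D.distB X D.e d
  simp only [D.vmul_e] at h
  exact h

/-- `ComR`: `(h ⋆ w) ∘ φR(d) = h ⋆ (w ∘ φR(d))`. -/
lemma dda_comR (h₀ w d : A) :
    D.vmul (D.hmul h₀ w) (D.hmul D.e d) = D.hmul h₀ (D.vmul w (D.hmul D.e d)) := by
  rw [dda_rho, dda_rho, dda_hmul_sum]
  exact Finset.sum_congr rfl fun j _ => by simp only [D.hassoc]

/-- `†`: `φB(c) ⋆ X = ∑ (c ⋆ (X ∘ xR_m)) ∘ yR_m`. -/
lemma dda_dag (c X : A) :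
    D.hmul (D.vmul c D.i) X = ∑ m, D.vmul (D.hmul c (D.vmul X (D.xR m))) (D.yR m) := by
  have h := D.distR X c D.i
  simp only [D.i_hmul] at h
  exact h

/-- `CasR-gen`. -/
lemma dda_casRgen (z g h₀ : A) :
    ∑ m, D.vmul (D.hmul z (D.vmul g (D.xR m))) (D.vmul (D.yR m) h₀)
      = ∑ m, D.vmul (D.hmul z (D.vmul (D.vmul g h₀) (D.xR m))) (D.yR m) := by
  have step1 : ∀ m, D.vmul (D.yR m) h₀
      = ∑ l, D.vmul (D.hmul D.e (D.vmul (D.yR m) (D.vmul h₀ (D.xR l)))) (D.yR l) := by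
    intro m
    have h := D.frobR1 (D.vmul (D.yR m) h₀)
    simp only [D.vassoc] at h
    exact h.symm
  calc ∑ m, D.vmul (D.hmul z (D.vmul g (D.xR m))) (D.vmul (D.yR m) h₀)
      = ∑ m, ∑ l, D.vmul (D.hmul z (D.vmul g (D.vmul (D.xR m)
          (D.hmul D.e (D.vmul (D.yR m) (D.vmul h₀ (D.xR l))))))) (D.yR l) := by
        refine Finset.sum_congr rfl fun m _ => ?_
        rw [step1 m, dda_vmul_sum]
        refine Finset.sum_congr rfl fun l _ => ?_
        rw [← D.vassoc, dda_comR, D.vassoc]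
    _ = ∑ l, ∑ m, D.vmul (D.hmul z (D.vmul g (D.vmul (D.xR m)
          (D.hmul D.e (D.vmul (D.yR m) (D.vmul h₀ (D.xR l))))))) (D.yR l) := Finset.sum_comm
    _ = ∑ l, D.vmul (D.hmul z (D.vmul g (D.vmul h₀ (D.xR l)))) (D.yR l) := by
        refine Finset.sum_congr rfl fun l _ => ?_
        rw [← dda_sum_vmul, ← dda_hmul_sum, ← dda_vmul_sum, dda_dualR]
    _ = ∑ m, D.vmul (D.hmul z (D.vmul (D.vmul g h₀) (D.xR m))) (D.yR m) := by
        simp only [D.vassoc]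

/-- `ComB`: `φB(c) ⋆ (h ∘ w) = (φB(c) ⋆ h) ∘ w`. -/
lemma dda_comB (c h₀ w : A) :
    D.hmul (D.vmul c D.i) (D.vmul h₀ w) = D.vmul (D.hmul (D.vmul c D.i) h₀) w := by
  rw [dda_dag, dda_dag, dda_sum_vmul]
  have h := dda_casRgen D c h₀ w
  simp only [D.vassoc] at h ⊢
  exact h.symm

/-- `‡`: `φT(t) ⋆ X = ∑ (X ∘ xR_m) ∘ (t ⋆ yR_m)`. -/
lemma dda_ddag (t X : A) :
    D.hmul (D.vmul D.i t) X = ∑ m, D.vmul (D.vmul X (D.xR m)) (D.hmul t (D.yR m)) := by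
  have h := D.distR X D.i t
  simp only [D.i_hmul] at h
  exact h

/-- `ComT-left`: `W ∘ (φT(t) ⋆ X) = φT(t) ⋆ (W ∘ X)`. -/
lemma dda_comTleft (W t X : A) :
    D.vmul W (D.hmul (D.vmul D.i t) X) = D.hmul (D.vmul D.i t) (D.vmul W X) := by
  rw [dda_ddag, dda_ddag, dda_vmul_sum]
  exact Finset.sum_congr rfl fun m _ => by rw [← D.vassoc, ← D.vassoc]

lemma dda_S_i : D.S D.i = D.i := by
  have key : ∀ x : A, D.hmul x (D.S D.i) = x := by
    intro x
    have h := D.S_hmul D.i (D.S.symm x)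
    rw [D.i_hmul, D.S.apply_symm_apply] at h
    exact h.symm
  have h2 := key D.i
  rw [D.i_hmul] at h2
  exact h2

/-- `ComB-right`: `(x ⋆ φB(c)) ∘ w = (x ∘ w) ⋆ φB(c)`. -/
lemma dda_comBright (x c w : A) :
    D.vmul (D.hmul x (D.vmul c D.i)) w = D.hmul (D.vmul x w) (D.vmul c D.i) := by
  apply D.S.injective
  rw [D.S_vmul, D.S_hmul, D.S_vmul, D.S_hmul, D.S_vmul, D.S_vmul, dda_S_i]
  exact dda_comTleft D (D.S w) (D.S c) (D.S x)

/-- `I1'`: `φB(x ⋆ φB(c)) = φB(x) ⋆ φB(c)`. -/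
lemma dda_phiB_right (x c : A) :
    D.vmul (D.hmul x (D.vmul c D.i)) D.i = D.hmul (D.vmul x D.i) (D.vmul c D.i) :=
  dda_comBright D x c D.i

/-- `H2`: `x ⋆ φT(φR d) = x ∘ φR(d)`. -/
lemma dda_h2 (x d : A) :
    D.hmul x (D.vmul D.i (D.hmul D.e d)) = D.vmul x (D.hmul D.e d) := by
  rw [← dda_g1, dda_hmul_sum, dda_rho]
  exact Finset.sum_congr rfl fun j _ => by rw [D.hassoc]

/-- `τ`: `φR(d) ∘ a = ∑ (a ⋆ uT_m) ⋆ (d ∘ vT_m)`. -/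
lemma dda_tau (a d : A) :
    D.vmul (D.hmul D.e d) a = ∑ m, D.hmul (D.hmul a (D.uT m)) (D.vmul d (D.vT m)) := by
  have h := D.distT a D.e d
  simp only [D.e_vmul] at h
  exact h

/-- `H2'`: `q ⋆ φB(φR d) = φR(d) ∘ q`. -/
lemma dda_h2' (q d : A) :
    D.hmul q (D.vmul (D.hmul D.e d) D.i) = D.vmul (D.hmul D.e d) q := by
  have hi := dda_tau D D.i d
  simp only [D.i_hmul] at hi
  rw [hi, dda_hmul_sum, dda_tau]
  exact Finset.sum_congr rfl fun m _ => by rw [D.hassoc]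

lemma dda_frobR1e : ∑ m, D.vmul (D.hmul D.e (D.xR m)) (D.yR m) = D.e := by
  have h := D.frobR1 D.e
  simp only [D.e_vmul] at h
  exact h

/-- `S1`: `∑ (z ⋆ xR_m) ∘ (yR_m ∘ h) = φB(z) ⋆ h`. -/
lemma dda_s1 (z h₀ : A) :
    ∑ m, D.vmul (D.hmul z (D.xR m)) (D.vmul (D.yR m) h₀) = D.hmul (D.vmul z D.i) h₀ := by
  have h := dda_casRgen D z D.e h₀
  simp only [D.e_vmul] at h
  rw [h, dda_dag]

end AuxAlg


open RightHMod

lemma dda_relAB_rel (a h₀ c : A) :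
    mkAB D (D.hmul a (D.vmul c D.i) ⊗ₜ[k] h₀) = mkAB D (a ⊗ₜ[k] D.hmul (D.vmul c D.i) h₀) := by
  show (relAB D).mkQ _ = (relAB D).mkQ _
  rw [Submodule.mkQ_apply, Submodule.mkQ_apply, Submodule.Quotient.eq]
  exact Submodule.subset_span ⟨a, h₀, c, rfl⟩

lemma dda_relXY_relY (Y Y' : RightHMod k A D) (x : Y.X) (y : Y'.X) (c : A) :
    mkXY Y Y' (Y.act x (D.phiT (D.phiR c)) ⊗ₜ[k] y)
      = mkXY Y Y' (x ⊗ₜ[k] Y'.act y (D.phiB (D.phiR c))) := by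
  show (relXY Y Y').mkQ _ = (relXY Y Y').mkQ _
  rw [Submodule.mkQ_apply, Submodule.mkQ_apply, Submodule.Quotient.eq]
  exact Submodule.subset_span ⟨x, y, c, rfl⟩

lemma dda_relXY_rel_reg (p q c : A) :
    mkXY (regH D) (regH D) (D.hmul p (D.vmul D.i (D.hmul D.e c)) ⊗ₜ[k] q)
      = mkXY (regH D) (regH D) (p ⊗ₜ[k] D.hmul q (D.vmul (D.hmul D.e c) D.i)) :=
  dda_relXY_relY D (regH D) (regH D) p q c

lemma dda_relXY_rel' (p q c : A) :
    mkXY (regH D) (regH D) (D.vmul p (D.hmul D.e c) ⊗ₜ[k] q)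
      = mkXY (regH D) (regH D) (p ⊗ₜ[k] D.vmul (D.hmul D.e c) q) := by
  rw [← dda_h2 D p c, ← dda_h2' D q c]
  exact dda_relXY_rel_reg D p q c

/-- `E-key`. -/
lemma dda_P1 (x y : A) :
    ∑ j, mkAB D (D.hmul x (D.uB j) ⊗ₜ[k] D.vmul (D.vB j) y)
      = ∑ l, mkAB D (D.uB l ⊗ₜ[k] D.vmul (D.hmul (D.vB l) x) y) := by
  calc ∑ j, mkAB D (D.hmul x (D.uB j) ⊗ₜ[k] D.vmul (D.vB j) y)
      = ∑ j, ∑ l, mkAB D (D.hmul (D.uB l) (D.vmul (D.hmul (D.vB l) (D.hmul x (D.uB j))) D.i)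
          ⊗ₜ[k] D.vmul (D.vB j) y) := by
        refine Finset.sum_congr rfl fun j _ => ?_
        conv_lhs => rw [← dda_dualB D (D.hmul x (D.uB j))]
        rw [TensorProduct.sum_tmul, map_sum]
    _ = ∑ j, ∑ l, mkAB D (D.uB l ⊗ₜ[k]
          D.hmul (D.vmul (D.hmul (D.hmul (D.vB l) x) (D.uB j)) D.i) (D.vmul (D.vB j) y)) := by
        refine Finset.sum_congr rfl fun j _ => Finset.sum_congr rfl fun l _ => ?_
        rw [dda_relAB_rel D (D.uB l) (D.vmul (D.vB j) y) (D.hmul (D.vB l) (D.hmul x (D.uB j))),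
          ← D.hassoc]
    _ = ∑ l, ∑ j, mkAB D (D.uB l ⊗ₜ[k]
          D.hmul (D.vmul (D.hmul (D.hmul (D.vB l) x) (D.uB j)) D.i) (D.vmul (D.vB j) y)) :=
        Finset.sum_comm
    _ = ∑ l, mkAB D (D.uB l ⊗ₜ[k] D.vmul (D.hmul (D.vB l) x) y) := by
        refine Finset.sum_congr rfl fun l _ => ?_
        rw [← map_sum, ← TensorProduct.tmul_sum, ← dda_expB D (D.hmul (D.vB l) x) y]

/-- AtB reconstruction. -/
lemma dda_P2 (a h₀ : A) :
    ∑ j, mkAB D (D.uB j ⊗ₜ[k] D.hmul (D.vmul (D.hmul (D.vB j) a) D.i) h₀) = mkAB D (a ⊗ₜ[k] h₀) := by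
  calc ∑ j, mkAB D (D.uB j ⊗ₜ[k] D.hmul (D.vmul (D.hmul (D.vB j) a) D.i) h₀)
      = ∑ j, mkAB D (D.hmul (D.uB j) (D.vmul (D.hmul (D.vB j) a) D.i) ⊗ₜ[k] h₀) :=
        Finset.sum_congr rfl fun j _ => (dda_relAB_rel D _ h₀ _).symm
    _ = mkAB D (a ⊗ₜ[k] h₀) := by
        rw [← map_sum, ← TensorProduct.sum_tmul, dda_dualB]

/-- Casimir move for the `B`-system mod `relAB`. -/
lemma dda_P3 (a kk w : A) :
    ∑ j, mkAB D (D.hmul a (D.hmul kk (D.uB j)) ⊗ₜ[k] D.vmul (D.vB j) w)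
      = ∑ j, mkAB D (D.hmul a (D.uB j) ⊗ₜ[k] D.vmul (D.hmul (D.vB j) kk) w) := by
  symm
  calc ∑ j, mkAB D (D.hmul a (D.uB j) ⊗ₜ[k] D.vmul (D.hmul (D.vB j) kk) w)
      = ∑ j, ∑ l, mkAB D (D.hmul a (D.uB j) ⊗ₜ[k]
          D.hmul (D.vmul (D.hmul (D.hmul (D.vB j) kk) (D.uB l)) D.i) (D.vmul (D.vB l) w)) := by
        refine Finset.sum_congr rfl fun j _ => ?_
        conv_lhs => rw [dda_expB D (D.hmul (D.vB j) kk) w]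
        rw [TensorProduct.tmul_sum, map_sum]
    _ = ∑ j, ∑ l, mkAB D (D.hmul a (D.hmul (D.uB j)
          (D.vmul (D.hmul (D.vB j) (D.hmul kk (D.uB l))) D.i)) ⊗ₜ[k] D.vmul (D.vB l) w) := by
        refine Finset.sum_congr rfl fun j _ => Finset.sum_congr rfl fun l _ => ?_
        rw [D.hassoc (D.vB j) kk (D.uB l),
          ← dda_relAB_rel D (D.hmul a (D.uB j)) (D.vmul (D.vB l) w)
            (D.hmul (D.vB j) (D.hmul kk (D.uB l))), D.hassoc]
    _ = ∑ l, ∑ j, mkAB D (D.hmul a (D.hmul (D.uB j)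
          (D.vmul (D.hmul (D.vB j) (D.hmul kk (D.uB l))) D.i)) ⊗ₜ[k] D.vmul (D.vB l) w) :=
        Finset.sum_comm
    _ = ∑ l, mkAB D (D.hmul a (D.hmul kk (D.uB l)) ⊗ₜ[k] D.vmul (D.vB l) w) := by
        refine Finset.sum_congr rfl fun l _ => ?_
        rw [← map_sum, ← TensorProduct.sum_tmul, ← dda_hmul_sum, dda_dualB D (D.hmul kk (D.uB l))]

/-- Part-3 key identity. -/
lemma dda_P4 (a a' h₀ : A) :
    ∑ m, ∑ j, mkAB D (D.hmul (D.hmul a (D.vmul h₀ (D.xR m))) (D.uB j)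
        ⊗ₜ[k] D.vmul (D.vB j) (D.hmul a' (D.yR m)))
      = ∑ j, mkAB D (D.hmul a (D.uB j) ⊗ₜ[k] D.hmul (D.vmul (D.vB j) a') h₀) := by
  symm
  calc ∑ j, mkAB D (D.hmul a (D.uB j) ⊗ₜ[k] D.hmul (D.vmul (D.vB j) a') h₀)
      = ∑ j, ∑ m, mkAB D (D.hmul a (D.uB j) ⊗ₜ[k]
          D.vmul (D.hmul (D.vB j) (D.vmul h₀ (D.xR m))) (D.hmul a' (D.yR m))) := by
        refine Finset.sum_congr rfl fun j _ => ?_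
        rw [D.distR h₀ (D.vB j) a', TensorProduct.tmul_sum, map_sum]
    _ = ∑ m, ∑ j, mkAB D (D.hmul a (D.uB j) ⊗ₜ[k]
          D.vmul (D.hmul (D.vB j) (D.vmul h₀ (D.xR m))) (D.hmul a' (D.yR m))) := Finset.sum_comm
    _ = ∑ m, ∑ j, mkAB D (D.hmul (D.hmul a (D.vmul h₀ (D.xR m))) (D.uB j)
          ⊗ₜ[k] D.vmul (D.vB j) (D.hmul a' (D.yR m))) := by
        refine Finset.sum_congr rfl fun m _ => ?_
        rw [← dda_P3 D a (D.vmul h₀ (D.xR m)) (D.hmul a' (D.yR m))]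
        simp only [← D.hassoc]

/-- `E2`: Casimir move for the `R`-system mod `relXY`. -/
lemma dda_P5 (x vv a' : A) :
    ∑ m, mkXY (regH D) (regH D) (D.hmul x (D.xR m) ⊗ₜ[k] D.vmul (D.yR m) (D.vmul vv a'))
      = ∑ l, mkXY (regH D) (regH D) (D.hmul x (D.vmul vv (D.xR l)) ⊗ₜ[k] D.vmul (D.yR l) a') := by
  calc ∑ m, mkXY (regH D) (regH D) (D.hmul x (D.xR m) ⊗ₜ[k] D.vmul (D.yR m) (D.vmul vv a'))
      = ∑ m, ∑ l, mkXY (regH D) (regH D) (D.hmul x (D.xR m) ⊗ₜ[k]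
          D.vmul (D.hmul D.e (D.vmul (D.yR m) (D.vmul vv (D.xR l)))) (D.vmul (D.yR l) a')) := by
        refine Finset.sum_congr rfl fun m _ => ?_
        have hexp : D.vmul (D.yR m) (D.vmul vv a')
            = ∑ l, D.vmul (D.hmul D.e (D.vmul (D.yR m) (D.vmul vv (D.xR l))))
                (D.vmul (D.yR l) a') := by
          conv_lhs => rw [← D.vassoc, ← D.frobR1 (D.vmul (D.yR m) vv)]
          rw [dda_sum_vmul]
          exact Finset.sum_congr rfl fun l _ => by rw [D.vassoc, D.vassoc]
        rw [hexp]
        erw [TensorProduct.tmul_sum, map_sum]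
    _ = ∑ m, ∑ l, mkXY (regH D) (regH D)
          (D.vmul (D.hmul x (D.xR m)) (D.hmul D.e (D.vmul (D.yR m) (D.vmul vv (D.xR l))))
            ⊗ₜ[k] D.vmul (D.yR l) a') := by
        refine Finset.sum_congr rfl fun m _ => Finset.sum_congr rfl fun l _ =>
          (dda_relXY_rel' D _ _ _).symm
    _ = ∑ l, ∑ m, mkXY (regH D) (regH D)
          (D.hmul x (D.vmul (D.xR m) (D.hmul D.e (D.vmul (D.yR m) (D.vmul vv (D.xR l)))))
            ⊗ₜ[k] D.vmul (D.yR l) a') := by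
        rw [Finset.sum_comm]
        exact Finset.sum_congr rfl fun l _ => Finset.sum_congr rfl fun m _ => by rw [dda_comR]
    _ = ∑ l, mkXY (regH D) (regH D) (D.hmul x (D.vmul vv (D.xR l)) ⊗ₜ[k] D.vmul (D.yR l) a') := by
        refine Finset.sum_congr rfl fun l _ => ?_
        rw [← map_sum]
        erw [← TensorProduct.sum_tmul]
        have hsum : ∑ m, D.hmul x (D.vmul (D.xR m)
            (D.hmul D.e (D.vmul (D.yR m) (D.vmul vv (D.xR l))))) = D.hmul x (D.vmul vv (D.xR l)) := by
          rw [← dda_hmul_sum, dda_dualR]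
        exact congrArg (fun t => mkXY (regH D) (regH D) (t ⊗ₜ[k] D.vmul (D.yR l) a')) hsum

/-- `W2` key identity. -/
lemma dda_P6 (a h₀ : A) :
    ∑ m, ∑ j, mkAB D (D.hmul (D.hmul a (D.xR m)) (D.uB j)
        ⊗ₜ[k] D.vmul (D.vB j) (D.vmul (D.yR m) h₀)) = mkAB D (a ⊗ₜ[k] h₀) := by
  calc ∑ m, ∑ j, mkAB D (D.hmul (D.hmul a (D.xR m)) (D.uB j)
        ⊗ₜ[k] D.vmul (D.vB j) (D.vmul (D.yR m) h₀))
      = ∑ m, ∑ l, mkAB D (D.uB l ⊗ₜ[k]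
          D.vmul (D.hmul (D.vB l) (D.hmul a (D.xR m))) (D.vmul (D.yR m) h₀)) :=
        Finset.sum_congr rfl fun m _ => dda_P1 D (D.hmul a (D.xR m)) (D.vmul (D.yR m) h₀)
    _ = ∑ l, ∑ m, mkAB D (D.uB l ⊗ₜ[k]
          D.vmul (D.hmul (D.hmul (D.vB l) a) (D.xR m)) (D.vmul (D.yR m) h₀)) := by
        rw [Finset.sum_comm]
        exact Finset.sum_congr rfl fun l _ => Finset.sum_congr rfl fun m _ => by
          rw [← D.hassoc]
    _ = ∑ l, mkAB D (D.uB l ⊗ₜ[k] D.hmul (D.vmul (D.hmul (D.vB l) a) D.i) h₀) := by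
        refine Finset.sum_congr rfl fun l _ => ?_
        rw [← map_sum, ← TensorProduct.tmul_sum, dda_s1]
    _ = mkAB D (a ⊗ₜ[k] h₀) := dda_P2 D a h₀

/-- `W3` key identity. -/
lemma dda_P7 (a a' : A) :
    ∑ j, ∑ m, mkXY (regH D) (regH D) (D.hmul (D.hmul a (D.uB j)) (D.xR m)
        ⊗ₜ[k] D.vmul (D.yR m) (D.vmul (D.vB j) a')) = mkXY (regH D) (regH D) (a ⊗ₜ[k] a') := by
  calc ∑ j, ∑ m, mkXY (regH D) (regH D) (D.hmul (D.hmul a (D.uB j)) (D.xR m)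
        ⊗ₜ[k] D.vmul (D.yR m) (D.vmul (D.vB j) a'))
      = ∑ j, ∑ l, mkXY (regH D) (regH D) (D.hmul (D.hmul a (D.uB j)) (D.vmul (D.vB j) (D.xR l))
          ⊗ₜ[k] D.vmul (D.yR l) a') :=
        Finset.sum_congr rfl fun j _ => dda_P5 D (D.hmul a (D.uB j)) (D.vB j) a'
    _ = ∑ l, ∑ j, mkXY (regH D) (regH D) (D.hmul a (D.hmul (D.uB j) (D.vmul (D.vB j) (D.xR l)))
          ⊗ₜ[k] D.vmul (D.yR l) a') := by
        rw [Finset.sum_comm]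
        exact Finset.sum_congr rfl fun l _ => Finset.sum_congr rfl fun j _ => by rw [D.hassoc]
    _ = ∑ l, mkXY (regH D) (regH D) (D.hmul a (D.vmul D.i (D.hmul D.e (D.xR l)))
          ⊗ₜ[k] D.vmul (D.yR l) a') := by
        refine Finset.sum_congr rfl fun l _ => ?_
        rw [← map_sum]
        erw [← TensorProduct.sum_tmul]
        have hsum : ∑ j, D.hmul a (D.hmul (D.uB j) (D.vmul (D.vB j) (D.xR l)))
            = D.hmul a (D.vmul D.i (D.hmul D.e (D.xR l))) := by
          rw [← dda_hmul_sum, dda_g1]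
        exact congrArg (fun t => mkXY (regH D) (regH D) (t ⊗ₜ[k] D.vmul (D.yR l) a')) hsum
    _ = ∑ l, mkXY (regH D) (regH D) (a ⊗ₜ[k] D.vmul (D.hmul D.e (D.xR l)) (D.vmul (D.yR l) a')) := by
        refine Finset.sum_congr rfl fun l _ => ?_
        rw [dda_relXY_rel_reg D a (D.vmul (D.yR l) a') (D.xR l), dda_h2']
    _ = mkXY (regH D) (regH D) (a ⊗ₜ[k] a') := by
        rw [← map_sum]
        erw [← TensorProduct.tmul_sum]
        have hsum : ∑ l, D.vmul (D.hmul D.e (D.xR l)) (D.vmul (D.yR l) a') = a' := by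
          simp only [← D.vassoc]
          rw [← dda_sum_vmul, dda_frobR1e, D.e_vmul]
        exact congrArg (fun t => mkXY (regH D) (regH D) (a ⊗ₜ[k] t)) hsum


lemma dda_regH_act : (regH D).act = D.hmul := rfl

lemma dda_ext_TensorR {Y Y' : RightHMod k A D} {M : Type} [AddCommGroup M] [Module k M]
    {f g : TensorR Y Y' →ₗ[k] M}
    (H : ∀ x y, f (mkXY Y Y' (x ⊗ₜ[k] y)) = g (mkXY Y Y' (x ⊗ₜ[k] y))) : ∀ z, f z = g z := by
  have h1 : f.comp (mkXY Y Y') = g.comp (mkXY Y Y') := TensorProduct.ext' H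
  intro z
  obtain ⟨w, rfl⟩ := Submodule.mkQ_surjective (relXY Y Y') z
  exact LinearMap.congr_fun h1 w

lemma dda_ext_AtB {M : Type} [AddCommGroup M] [Module k M]
    {f g : AtB D →ₗ[k] M}
    (H : ∀ a h₀ : A, f (mkAB D (a ⊗ₜ[k] h₀)) = g (mkAB D (a ⊗ₜ[k] h₀))) : ∀ z, f z = g z := by
  have h1 : f.comp (mkAB D) = g.comp (mkAB D) := TensorProduct.ext' H
  intro z
  obtain ⟨w, rfl⟩ := Submodule.mkQ_surjective (relAB D) z
  exact LinearMap.congr_fun h1 w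

/-- The candidate inverse of `Γ`, on `A ⊗ A`. -/
def dda_GammaInvTilde : (A ⊗[k] A) →ₗ[k] TensorR (regH D) (regH D) :=
  ∑ m, (mkXY (regH D) (regH D)).comp
    (TensorProduct.map (D.hmul.flip (D.xR m)) (D.vmul (D.yR m)))

lemma dda_GammaInvTilde_apply (a h₀ : A) :
    dda_GammaInvTilde D (a ⊗ₜ[k] h₀)
      = ∑ m, mkXY (regH D) (regH D) (D.hmul a (D.xR m) ⊗ₜ[k] D.vmul (D.yR m) h₀) := by
  simp only [dda_GammaInvTilde, LinearMap.sum_apply, LinearMap.comp_apply,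
    TensorProduct.map_tmul, LinearMap.flip_apply]
  exact Finset.sum_congr rfl fun m _ => rfl

/-- `W1`: the inverse of `Γ` descends to `A ⊗_B H`. -/
def dda_GammaInv : AtB D →ₗ[k] TensorR (regH D) (regH D) :=
  Submodule.liftQ (relAB D) (dda_GammaInvTilde D) (by
    rw [relAB, Submodule.span_le]
    rintro z ⟨a, h₀, c, rfl⟩
    simp only [SetLike.mem_coe, LinearMap.mem_ker, map_sub, DDA.phiB]
    rw [dda_GammaInvTilde_apply, dda_GammaInvTilde_apply, sub_eq_zero]
    have h5 := dda_P5 D (D.hmul a (D.vmul c D.i)) h₀ D.e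
    simp only [D.vmul_e] at h5
    have h5' := dda_P5 D a (D.hmul (D.vmul c D.i) h₀) D.e
    simp only [D.vmul_e] at h5'
    rw [h5, h5']
    refine Finset.sum_congr rfl fun l _ => ?_
    rw [D.hassoc, ← dda_comB D c h₀ (D.xR l)])

lemma dda_GammaInv_mk (a h₀ : A) :
    dda_GammaInv D (mkAB D (a ⊗ₜ[k] h₀))
      = ∑ m, mkXY (regH D) (regH D) (D.hmul a (D.xR m) ⊗ₜ[k] D.vmul (D.yR m) h₀) := by
  have h : dda_GammaInv D (mkAB D (a ⊗ₜ[k] h₀)) = dda_GammaInvTilde D (a ⊗ₜ[k] h₀) :=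
    Submodule.liftQ_apply _ _ _
  rw [h, dda_GammaInvTilde_apply]

/-- The right `H`-action on `A ⊗_B H` through the second factor. -/
def dda_actAB (kk : A) : AtB D →ₗ[k] AtB D :=
  Submodule.liftQ (relAB D)
    ((mkAB D).comp (TensorProduct.map LinearMap.id (D.hmul.flip kk))) (by
    rw [relAB, Submodule.span_le]
    rintro z ⟨a, h₀, c, rfl⟩
    simp only [SetLike.mem_coe, LinearMap.mem_ker, map_sub, DDA.phiB, LinearMap.comp_apply,
      TensorProduct.map_tmul, LinearMap.id_apply, LinearMap.flip_apply]
    rw [sub_eq_zero, D.hassoc]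
    exact dda_relAB_rel D a (D.hmul h₀ kk) c)

lemma dda_actAB_mk (kk a h₀ : A) :
    dda_actAB D kk (mkAB D (a ⊗ₜ[k] h₀)) = mkAB D (a ⊗ₜ[k] D.hmul h₀ kk) := by
  have h : dda_actAB D kk (mkAB D (a ⊗ₜ[k] h₀))
      = (mkAB D).comp (TensorProduct.map LinearMap.id (D.hmul.flip kk)) (a ⊗ₜ[k] h₀) :=
    Submodule.liftQ_apply _ _ _
  rw [h]
  simp only [LinearMap.comp_apply, TensorProduct.map_tmul, LinearMap.id_apply,
    LinearMap.flip_apply]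

/-- The `B`-valued coordinates of `A ⊗_B H`. -/
def dda_Chat (j : Fin D.nB) : AtB D →ₗ[k] A :=
  Submodule.liftQ (relAB D)
    (TensorProduct.lift (D.hmul.comp ((D.vmul.flip D.i).comp (D.hmul (D.vB j))))) (by
    rw [relAB, Submodule.span_le]
    rintro z ⟨a, h₀, c, rfl⟩
    simp only [SetLike.mem_coe, LinearMap.mem_ker, map_sub, DDA.phiB, TensorProduct.lift.tmul,
      LinearMap.comp_apply, LinearMap.flip_apply]
    rw [sub_eq_zero, ← D.hassoc (D.vB j) a (D.vmul c D.i),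
      dda_phiB_right D (D.hmul (D.vB j) a) c, D.hassoc])

lemma dda_Chat_mk (j : Fin D.nB) (a h₀ : A) :
    dda_Chat D j (mkAB D (a ⊗ₜ[k] h₀)) = D.hmul (D.vmul (D.hmul (D.vB j) a) D.i) h₀ := by
  have h : dda_Chat D j (mkAB D (a ⊗ₜ[k] h₀))
      = TensorProduct.lift (D.hmul.comp ((D.vmul.flip D.i).comp (D.hmul (D.vB j)))) (a ⊗ₜ[k] h₀) :=
    Submodule.liftQ_apply _ _ _
  rw [h]
  simp only [TensorProduct.lift.tmul, LinearMap.comp_apply, LinearMap.flip_apply]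


/-- For a Frobenius Hopf algebroid `H` (the horizontal Hopf
algebroid of a distributive double algebra), the finitely generated projective
right `H`-modules are closed under the monoidal product `⊗_R`; in particular
`H ⊗_R H` is a finitely generated projective right `H`-module, via the right
`H`-module isomorphism `Γ_RB : H ⊗_R H → A ⊗_B H`,
`a ⊗ a' ↦ a_(1) ⊗_B (a_(2) ∘ a')`, where `A_B` is finitely generated
projective. -/
theorem stmt18
    -- data for the particular claim about `H ⊗_R H`
    (act2 : RightHMod.TensorR (regH D) (regH D) →ₗ[k] A →ₗ[k] RightHMod.TensorR (regH D) (regH D))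
    (hact2 : RightHMod.IsDiagAct (regH D) (regH D) act2)
    (Γ : RightHMod.TensorR (regH D) (regH D) →ₗ[k] AtB D)
    (hΓ : ∀ a a', Γ (RightHMod.mkXY (regH D) (regH D) (a ⊗ₜ[k] a'))
      = ∑ j, mkAB D (D.hmul a (D.uB j) ⊗ₜ[k] D.vmul (D.vB j) a')) :
    -- closure of fgp modules under the monoidal product
    (∀ (Y Y' : RightHMod k A D)
      (act2' : RightHMod.TensorR Y Y' →ₗ[k] A →ₗ[k] RightHMod.TensorR Y Y'),
      RightHMod.IsDiagAct Y Y' act2' → Y.Fgp → Y'.Fgp → RightHMod.FgpOn Y Y' act2') ∧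
    -- `Γ_RB` is a bijective right `H`-module map …
    Function.Bijective Γ ∧
    (∀ a a' h, Γ (act2 (RightHMod.mkXY (regH D) (regH D) (a ⊗ₜ[k] a')) h)
      = ∑ j, mkAB D (D.hmul a (D.uB j) ⊗ₜ[k] D.hmul (D.vmul (D.vB j) a') h)) ∧
    -- … hence `H ⊗_R H` is finitely generated projective
    RightHMod.FgpOn (regH D) (regH D) act2 := by
  classical
  -- `IsDiagAct` with the regular action written out via `hmul`
  have hact2h : ∀ p q h : A, act2 (mkXY (regH D) (regH D) (p ⊗ₜ[k] q)) h
      = ∑ m, mkXY (regH D) (regH D)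
          (D.hmul p (D.vmul h (D.xR m)) ⊗ₜ[k] D.hmul q (D.yR m)) := fun p q h => hact2 p q h
  -- Part 3 on generators
  have hpart3 : ∀ a a' h, Γ (act2 (mkXY (regH D) (regH D) (a ⊗ₜ[k] a')) h)
      = ∑ j, mkAB D (D.hmul a (D.uB j) ⊗ₜ[k] D.hmul (D.vmul (D.vB j) a') h) := by
    intro a a' h
    rw [hact2h a a' h, map_sum]
    refine (Finset.sum_congr rfl fun m _ => hΓ _ _).trans ?_
    exact dda_P4 D a a' h
  -- Γ ∘ Γ⁻¹ = id
  have hGGi : ∀ ξ, Γ (dda_GammaInv D ξ) = ξ := by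
    intro ξ
    have h := dda_ext_AtB D (f := Γ.comp (dda_GammaInv D)) (g := LinearMap.id)
      (fun a h₀ => by
        simp only [LinearMap.comp_apply, LinearMap.id_apply]
        rw [dda_GammaInv_mk, map_sum]
        refine (Finset.sum_congr rfl fun m _ => hΓ _ _).trans ?_
        exact dda_P6 D a h₀) ξ
    simpa only [LinearMap.comp_apply, LinearMap.id_apply] using h
  -- Γ⁻¹ ∘ Γ = id
  have hGiG : ∀ z, dda_GammaInv D (Γ z) = z := by
    intro z
    have h := dda_ext_TensorR D (f := (dda_GammaInv D).comp Γ) (g := LinearMap.id)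
      (fun a a' => by
        simp only [LinearMap.comp_apply, LinearMap.id_apply]
        rw [hΓ, map_sum]
        simp only [dda_GammaInv_mk]
        exact dda_P7 D a a') z
    simpa only [LinearMap.comp_apply, LinearMap.id_apply] using h
  have hbij : Function.Bijective Γ :=
    ⟨Function.LeftInverse.injective hGiG, Function.RightInverse.surjective hGGi⟩
  -- Part 3, general form
  have hpart3g : ∀ z h, Γ (act2 z h) = dda_actAB D h (Γ z) := by
    intro z h
    have hext := dda_ext_TensorR D (f := Γ.comp (act2.flip h))
      (g := (dda_actAB D h).comp Γ)
      (fun x y => by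
        simp only [LinearMap.comp_apply, LinearMap.flip_apply]
        rw [hpart3 x y h, hΓ, map_sum]
        simp only [dda_actAB_mk]) z
    simpa only [LinearMap.comp_apply, LinearMap.flip_apply] using hext
  have hGiact : ∀ ξ h, dda_GammaInv D (dda_actAB D h ξ) = act2 (dda_GammaInv D ξ) h := by
    intro ξ h
    conv_lhs => rw [← hGGi ξ]
    rw [← hpart3g (dda_GammaInv D ξ) h, hGiG]
  have hChatAct : ∀ (j : Fin D.nB) h ξ, dda_Chat D j (dda_actAB D h ξ)
      = D.hmul (dda_Chat D j ξ) h := by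
    intro j h ξ
    have hext := dda_ext_AtB D (f := (dda_Chat D j).comp (dda_actAB D h))
      (g := (D.hmul.flip h).comp (dda_Chat D j))
      (fun a h₀ => by
        simp only [LinearMap.comp_apply, LinearMap.flip_apply]
        rw [dda_actAB_mk, dda_Chat_mk, dda_Chat_mk, D.hassoc]) ξ
    simpa only [LinearMap.comp_apply, LinearMap.flip_apply] using hext
  have hrecon : ∀ ξ, ∑ j, mkAB D (D.uB j ⊗ₜ[k] dda_Chat D j ξ) = ξ := by
    intro ξ
    have hext := dda_ext_AtB D
      (f := ∑ j, (mkAB D).comp ((TensorProduct.mk k A A (D.uB j)).comp (dda_Chat D j)))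
      (g := LinearMap.id)
      (fun a h₀ => by
        simp only [LinearMap.sum_apply, LinearMap.comp_apply, TensorProduct.mk_apply,
          LinearMap.id_apply]
        simp only [dda_Chat_mk]
        exact dda_P2 D a h₀) ξ
    simpa only [LinearMap.sum_apply, LinearMap.comp_apply, TensorProduct.mk_apply,
      LinearMap.id_apply] using hext
  -- fgp structure on `H ⊗_R H`
  have hfgpreg : RightHMod.FgpOn (regH D) (regH D) act2 := by
    refine ⟨D.nB, LinearMap.pi (fun j => (dda_Chat D j).comp Γ),
      (dda_GammaInv D).comp
        (∑ j, (mkAB D).comp ((TensorProduct.mk k A A (D.uB j)).comp (LinearMap.proj j))),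
      ?_, ?_, ?_⟩
    · intro z h j
      simp only [LinearMap.pi_apply, LinearMap.comp_apply]
      rw [hpart3g z h, hChatAct]
    · intro v h
      simp only [LinearMap.comp_apply, LinearMap.sum_apply, LinearMap.proj_apply,
        TensorProduct.mk_apply]
      have hs : ∑ j, mkAB D (D.uB j ⊗ₜ[k] D.hmul (v j) h)
          = dda_actAB D h (∑ j, mkAB D (D.uB j ⊗ₜ[k] v j)) := by
        rw [map_sum]
        exact Finset.sum_congr rfl fun j _ => (dda_actAB_mk D h (D.uB j) (v j)).symm
      rw [hs, hGiact]
    · intro z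
      simp only [LinearMap.comp_apply, LinearMap.sum_apply, LinearMap.proj_apply,
        TensorProduct.mk_apply, LinearMap.pi_apply]
      rw [hrecon (Γ z), hGiG]
  -- closure under the monoidal product
  have hclosure : ∀ (Y Y' : RightHMod k A D)
      (act2' : TensorR Y Y' →ₗ[k] A →ₗ[k] TensorR Y Y'),
      IsDiagAct Y Y' act2' → Y.Fgp → Y'.Fgp → FgpOn Y Y' act2' := by
    rintro Y Y' act2' hd ⟨n, uY, pY, hu, hp, hpu⟩ ⟨n', uY', pY', hu', hp', hpu'⟩
    have hsingle : ∀ {nn : ℕ} (s : Fin nn) (α b : A),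
        (Pi.single s (D.hmul α b) : Fin nn → A) = fun j => D.hmul ((Pi.single s α : Fin nn → A) j) b := by
      intro nn s α b
      funext jj
      by_cases hjj : jj = s
      · subst hjj; simp
      · simp [Pi.single_eq_of_ne hjj, LinearMap.map_zero₂]
    let Φ : Fin n → Fin n' → (TensorR Y Y' →ₗ[k] TensorR (regH D) (regH D)) := fun s t =>
      Submodule.liftQ (relXY Y Y')
        ((mkXY (regH D) (regH D)).comp
          (TensorProduct.map ((LinearMap.proj s).comp uY) ((LinearMap.proj t).comp uY')))
        (by
          rw [relXY, Submodule.span_le]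
          rintro z ⟨x, y, c, rfl⟩
          simp only [SetLike.mem_coe, LinearMap.mem_ker, map_sub, LinearMap.comp_apply,
            TensorProduct.map_tmul, LinearMap.proj_apply]
          rw [sub_eq_zero]
          show mkXY (regH D) (regH D)
              (uY (Y.act x (D.phiT (D.phiR c))) s ⊗ₜ[k] uY' y t)
            = mkXY (regH D) (regH D)
              (uY x s ⊗ₜ[k] uY' (Y'.act y (D.phiB (D.phiR c))) t)
          rw [hu, hu']
          exact dda_relXY_relY D (regH D) (regH D) (uY x s) (uY' y t) c)
    have hΦmk : ∀ s t x y, Φ s t (mkXY Y Y' (x ⊗ₜ[k] y))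
        = mkXY (regH D) (regH D) (uY x s ⊗ₜ[k] uY' y t) := fun s t x y => rfl
    let Ψ : Fin n → Fin n' → (TensorR (regH D) (regH D) →ₗ[k] TensorR Y Y') := fun s t =>
      Submodule.liftQ (relXY (regH D) (regH D))
        ((mkXY Y Y').comp
          (TensorProduct.map (pY.comp (LinearMap.single k (fun _ => A) s))
            (pY'.comp (LinearMap.single k (fun _ => A) t))))
        (by
          rw [relXY, Submodule.span_le]
          rintro z ⟨p, q, c, rfl⟩
          simp only [SetLike.mem_coe, LinearMap.mem_ker, map_sub, LinearMap.comp_apply,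
            TensorProduct.map_tmul, LinearMap.coe_single]
          rw [sub_eq_zero]
          show mkXY Y Y'
              (pY (Pi.single s (D.hmul p (D.phiT (D.phiR c)))) ⊗ₜ[k] pY' (Pi.single t q))
            = mkXY Y Y'
              (pY (Pi.single s p) ⊗ₜ[k] pY' (Pi.single t (D.hmul q (D.phiB (D.phiR c)))))
          rw [hsingle s p (D.phiT (D.phiR c)), hsingle t q (D.phiB (D.phiR c)), hp, hp']
          exact dda_relXY_relY D Y Y' (pY (Pi.single s p)) (pY' (Pi.single t q)) c)
    have hΨmk : ∀ s t (α β : A), Ψ s t (mkXY (regH D) (regH D) (α ⊗ₜ[k] β))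
        = mkXY Y Y' (pY (Pi.single s α) ⊗ₜ[k] pY' (Pi.single t β)) := fun s t α β => rfl
    have hΦact : ∀ s t (z : TensorR Y Y') h, Φ s t (act2' z h) = act2 (Φ s t z) h := by
      intro s t z h
      have hext := dda_ext_TensorR D (f := (Φ s t).comp (act2'.flip h))
        (g := (act2.flip h).comp (Φ s t))
        (fun x y => by
          simp only [LinearMap.comp_apply, LinearMap.flip_apply]
          rw [hd x y h, map_sum, hΦmk s t x y, hact2h]
          refine Finset.sum_congr rfl fun m _ => ?_
          rw [hΦmk, hu, hu']) z
      simpa only [LinearMap.comp_apply, LinearMap.flip_apply] using hext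
    have hΨact : ∀ s t ζ h, Ψ s t (act2 ζ h) = act2' (Ψ s t ζ) h := by
      intro s t ζ h
      have hext := dda_ext_TensorR D (f := (Ψ s t).comp (act2.flip h))
        (g := (act2'.flip h).comp (Ψ s t))
        (fun α β => by
          simp only [LinearMap.comp_apply, LinearMap.flip_apply]
          rw [hact2h α β h, map_sum]
          simp only [hΨmk]
          refine Eq.trans ?_ (congrArg (fun w => act2' w h) (hΨmk s t α β)).symm
          rw [hd (pY (Pi.single s α)) (pY' (Pi.single t β)) h]
          refine Finset.sum_congr rfl fun m _ => ?_
          rw [hsingle s α (D.vmul h (D.xR m)), hsingle t β (D.yR m), hp, hp']) ζ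
      simpa only [LinearMap.comp_apply, LinearMap.flip_apply] using hext
    have hPsiPhi : ∀ z, ∑ p : Fin n × Fin n', Ψ p.1 p.2 (Φ p.1 p.2 z) = z := by
      intro z
      have hext := dda_ext_TensorR D
        (f := ∑ p : Fin n × Fin n', (Ψ p.1 p.2).comp (Φ p.1 p.2)) (g := LinearMap.id)
        (fun x y => by
          simp only [LinearMap.sum_apply, LinearMap.comp_apply, LinearMap.id_apply]
          have hterm : ∀ p : Fin n × Fin n', Ψ p.1 p.2 (Φ p.1 p.2 (mkXY Y Y' (x ⊗ₜ[k] y)))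
              = mkXY Y Y' (pY (Pi.single p.1 (uY x p.1)) ⊗ₜ[k] pY' (Pi.single p.2 (uY' y p.2))) := by
            intro p; rw [hΦmk, hΨmk]
          rw [Finset.sum_congr rfl fun p _ => hterm p, Fintype.sum_prod_type]
          have hinner : ∀ s, ∑ t, mkXY Y Y'
              (pY (Pi.single s (uY x s)) ⊗ₜ[k] pY' (Pi.single t (uY' y t)))
              = mkXY Y Y' (pY (Pi.single s (uY x s)) ⊗ₜ[k] y) := by
            intro s
            rw [← map_sum, ← TensorProduct.tmul_sum, ← map_sum, Finset.univ_sum_single, hpu']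
          rw [Finset.sum_congr rfl fun s _ => hinner s, ← map_sum, ← TensorProduct.sum_tmul,
            ← map_sum, Finset.univ_sum_single, hpu]) z
      simpa only [LinearMap.sum_apply, LinearMap.comp_apply, LinearMap.id_apply] using hext
    let ee : (Fin n × Fin n') × Fin D.nB ≃ Fin (n * n' * D.nB) :=
      (finProdFinEquiv.prodCongr (Equiv.refl (Fin D.nB))).trans finProdFinEquiv
    refine ⟨n * n' * D.nB,
      LinearMap.pi (fun r => (dda_Chat D ((ee.symm r).2)).comp
        (Γ.comp (Φ (ee.symm r).1.1 (ee.symm r).1.2))),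
      ∑ q : (Fin n × Fin n') × Fin D.nB, (Ψ q.1.1 q.1.2).comp ((dda_GammaInv D).comp
        ((mkAB D).comp ((TensorProduct.mk k A A (D.uB q.2)).comp (LinearMap.proj (ee q))))),
      ?_, ?_, ?_⟩
    · intro z h r
      simp only [LinearMap.pi_apply, LinearMap.comp_apply]
      rw [hΦact _ _ z h, hpart3g, hChatAct]
    · intro v h
      simp only [LinearMap.sum_apply, LinearMap.comp_apply, LinearMap.proj_apply,
        TensorProduct.mk_apply]
      have hstep : ∀ q : (Fin n × Fin n') × Fin D.nB,
          Ψ q.1.1 q.1.2 (dda_GammaInv D (mkAB D (D.uB q.2 ⊗ₜ[k] D.hmul (v (ee q)) h)))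
            = act2' (Ψ q.1.1 q.1.2 (dda_GammaInv D (mkAB D (D.uB q.2 ⊗ₜ[k] v (ee q))))) h := by
        intro q
        rw [show mkAB D (D.uB q.2 ⊗ₜ[k] D.hmul (v (ee q)) h)
            = dda_actAB D h (mkAB D (D.uB q.2 ⊗ₜ[k] v (ee q))) from
          (dda_actAB_mk D h _ _).symm, hGiact, hΨact]
      rw [Finset.sum_congr rfl fun q _ => hstep q]
      exact (map_sum (act2'.flip h) _ Finset.univ).symm
    · intro z
      simp only [LinearMap.sum_apply, LinearMap.comp_apply, LinearMap.proj_apply,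
        TensorProduct.mk_apply, LinearMap.pi_apply, Equiv.symm_apply_apply]
      rw [Fintype.sum_prod_type]
      have hstep : ∀ p : Fin n × Fin n',
          ∑ j, Ψ p.1 p.2 (dda_GammaInv D (mkAB D (D.uB j ⊗ₜ[k] dda_Chat D j (Γ (Φ p.1 p.2 z)))))
            = Ψ p.1 p.2 (Φ p.1 p.2 z) := by
        intro p
        rw [← map_sum, ← map_sum, hrecon (Γ (Φ p.1 p.2 z)), hGiG]
      rw [Finset.sum_congr rfl fun p _ => hstep p]
      exact hPsiPhi z
  exact ⟨hclosure, hbij, hpart3, hfgpreg⟩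


end Stmt18
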